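/- Let b ∈ (0,1) and c > 0, and consider the system on X = ℝ² given by A(n)(x₁,x₂) = (b a_n x₁, x₂/b), where a_n = 1/(n+2)^c if n is even and a_n = (n+1)^c if n is odd, with projections P(n)(x₁,x₂) = (x₁,0). Then the system is P-nonuniformly exponentially dichotomic; more precisely, with α = −ln b and the nondecreasing sequence N(n) = (n+2)^c one has e^{α(m−n)}(‖𝒜_P(m,n)x‖ + ‖Q(n)x‖) ≤ N(n)‖P(n)x‖ + N(m)‖𝒜_Q(m,n)x‖ for all m ≥ n and all x ∈ ℝ². -/

import Mathlib

open Real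

/-- The evolution operator started at time `n`, after `k` steps:
`A(n+k) ⋯ A(n+1)`. -/
noncomputable def evolFrom {X : Type*} [NormedAddCommGroup X] [NormedSpace ℝ X]
    (A : ℕ → X →L[ℝ] X) (n : ℕ) : ℕ → X →L[ℝ] X
  | 0 => 1
  | k + 1 => (A (n + k + 1)).comp (evolFrom A n k)

/-- The evolution operator `𝒜(m,n) = A(m) ⋯ A(n+1)` for `m ≥ n`, `𝒜(n,n) = I`. -/
noncomputable def evol {X : Type*} [NormedAddCommGroup X] [NormedSpace ℝ X]
    (A : ℕ → X →L[ℝ] X) (m n : ℕ) : X →L[ℝ] X :=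
  evolFrom A n (m - n)

/-- `𝒜_P(m,n) = 𝒜(m,n) P(n)`. -/
noncomputable def evolP {X : Type*} [NormedAddCommGroup X] [NormedSpace ℝ X]
    (A P : ℕ → X →L[ℝ] X) (m n : ℕ) : X →L[ℝ] X :=
  (evol A m n).comp (P n)

/-- `𝒜_Q(m,n) = 𝒜(m,n) Q(n)` where `Q(n) = I - P(n)`. -/
noncomputable def evolQ {X : Type*} [NormedAddCommGroup X] [NormedSpace ℝ X]
    (A P : ℕ → X →L[ℝ] X) (m n : ℕ) : X →L[ℝ] X :=
  (evol A m n).comp (1 - P n)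

/-- The system is P-nonuniformly exponentially dichotomic. -/
def IsNED {X : Type*} [NormedAddCommGroup X] [NormedSpace ℝ X]
    (A P : ℕ → X →L[ℝ] X) : Prop :=
  ∃ α : ℝ, 0 < α ∧ ∃ N : ℕ → ℝ, (∀ n, 0 < N n) ∧ Monotone N ∧
    ∀ m n : ℕ, n ≤ m → ∀ x : X,
      exp (α * ((m : ℝ) - n)) * (‖evolP A P m n x‖ + ‖(1 - P n) x‖) ≤
        N n * ‖P n x‖ + N m * ‖evolQ A P m n x‖

/-- The diagonal operator `(x₁, x₂) ↦ (u x₁, v x₂)` on `ℝ²`. -/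
noncomputable def diagCLM (u v : ℝ) : ℝ × ℝ →L[ℝ] ℝ × ℝ :=
  (u • ContinuousLinearMap.fst ℝ ℝ ℝ).prod (v • ContinuousLinearMap.snd ℝ ℝ ℝ)

/-- The family of projections `P(n)(x₁, x₂) = (x₁, 0)` on `ℝ²`. -/
noncomputable def projFst : ℕ → (ℝ × ℝ →L[ℝ] ℝ × ℝ) :=
  fun _ => (ContinuousLinearMap.fst ℝ ℝ ℝ).prod 0

/-- Example: the system is P-nonuniformly exponentially dichotomic, with
`α = -ln b` and the nondecreasing sequence `N(n) = (n+2)^c`. -/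
theorem example_nonuniform_exponential_dichotomy
    (b c : ℝ) (hb0 : 0 < b) (hb1 : b < 1) (hc : 0 < c)
    (a : ℕ → ℝ)
    (ha : ∀ n, a n = if Even n then (((n : ℝ) + 2) ^ c)⁻¹ else ((n : ℝ) + 1) ^ c)
    (A : ℕ → ℝ × ℝ →L[ℝ] ℝ × ℝ) (hA : ∀ n, A n = diagCLM (b * a n) b⁻¹) :
    (∀ m n : ℕ, n ≤ m → ∀ x : ℝ × ℝ,
      exp ((-Real.log b) * ((m : ℝ) - n)) *
          (‖evolP A projFst m n x‖ + ‖(1 - projFst n) x‖) ≤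
        ((n : ℝ) + 2) ^ c * ‖projFst n x‖ +
          ((m : ℝ) + 2) ^ c * ‖evolQ A projFst m n x‖) ∧
    IsNED A projFst := by
  have hlogb : Real.log b < 0 := Real.log_neg hb0 hb1
  have hapos : ∀ j, 0 < a j := by
    intro j; rw [ha]; split <;> positivity
  set F : ℕ → ℝ := fun n => if Even n then 1 else ((n : ℝ) + 1) ^ (-c) with hFdef
  have hFpos : ∀ n, 0 < F n := by
    intro n; simp only [hFdef]
    split
    · norm_num
    · exact Real.rpow_pos_of_pos (by positivity) _
  have hFle : ∀ n, F n ≤ 1 := by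
    intro n; simp only [hFdef]
    split
    · exact le_refl 1
    · exact Real.rpow_le_one_of_one_le_of_nonpos (by linarith [Nat.cast_nonneg (α := ℝ) n]) (by linarith)
  have hFstep : ∀ n, F (n + 1) = F n * a n := by
    intro n
    rcases Nat.even_or_odd n with he | ho
    · have h1 : ¬ Even (n + 1) := by simp [Nat.even_add_one, he]
      simp only [hFdef, if_pos he, if_neg h1, ha n, if_pos he, one_mul]
      rw [Real.rpow_neg (by positivity)]
      push_cast; ring_nf
    · have h1 : Even (n + 1) := Odd.add_one ho
      have h2 : ¬ Even n := Nat.not_even_iff_odd.mpr ho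
      simp only [hFdef, if_pos h1, if_neg h2, ha n, if_neg h2]
      rw [Real.rpow_neg (by positivity)]
      exact (inv_mul_cancel₀ (ne_of_gt (Real.rpow_pos_of_pos (by positivity) c))).symm
  have hG : ∀ n k, (∏ j ∈ Finset.range k, a (n + j + 1)) * F (n + 1) = F (n + k + 1) := by
    intro n k
    induction k with
    | zero => simp
    | succ k ih =>
      rw [Finset.prod_range_succ, mul_right_comm, ih,
        show n + (k + 1) + 1 = (n + k + 1) + 1 from by ring, hFstep (n + k + 1)]
  have hGpos : ∀ n k, 0 < ∏ j ∈ Finset.range k, a (n + j + 1) := by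
    intro n k
    exact Finset.prod_pos fun j _ => hapos _
  have hFge : ∀ n : ℕ, ((n : ℝ) + 2) ^ (-c) ≤ F (n + 1) := by
    intro n
    simp only [hFdef]
    split
    · exact Real.rpow_le_one_of_one_le_of_nonpos (by linarith [Nat.cast_nonneg (α := ℝ) n]) (by linarith)
    · apply le_of_eq; congr 1; push_cast; ring
  have hGle : ∀ n k, (∏ j ∈ Finset.range k, a (n + j + 1)) ≤ ((n : ℝ) + 2) ^ c := by
    intro n k
    set G := ∏ j ∈ Finset.range k, a (n + j + 1) with hGdef
    have ht : (0 : ℝ) < ((n : ℝ) + 2) ^ (-c) := Real.rpow_pos_of_pos (by positivity) _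
    have h1 : G * ((n : ℝ) + 2) ^ (-c) ≤ 1 := by
      calc G * ((n : ℝ) + 2) ^ (-c) ≤ G * F (n + 1) :=
            mul_le_mul_of_nonneg_left (hFge n) (hGpos n k).le
        _ = F (n + k + 1) := hG n k
        _ ≤ 1 := hFle _
    have h2 : G ≤ 1 / ((n : ℝ) + 2) ^ (-c) := (le_div_iff₀ ht).mpr h1
    rwa [Real.rpow_neg (by positivity), one_div, inv_inv] at h2
  have hdiag : ∀ u v : ℝ, ∀ x : ℝ × ℝ, diagCLM u v x = (u * x.1, v * x.2) := by
    intro u v x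
    simp [diagCLM, ContinuousLinearMap.prod_apply, smul_eq_mul]
  have hev : ∀ n k : ℕ, ∀ x : ℝ × ℝ, evolFrom A n k x =
      (b ^ k * ((∏ j ∈ Finset.range k, a (n + j + 1)) * x.1), (b⁻¹) ^ k * x.2) := by
    intro n k
    induction k with
    | zero => intro x; simp [evolFrom]
    | succ k ih =>
      intro x
      simp only [evolFrom, ContinuousLinearMap.comp_apply, ih, hA, hdiag,
        Finset.prod_range_succ, pow_succ]
      simp only [Prod.mk.injEq]
      constructor <;> ring
  have hP : ∀ n : ℕ, ∀ x : ℝ × ℝ, projFst n x = (x.1, 0) := by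
    intro n x; simp [projFst]
  have hQ : ∀ n : ℕ, ∀ x : ℝ × ℝ, (1 - projFst n) x = (0, x.2) := by
    intro n x
    simp [ContinuousLinearMap.sub_apply, hP, Prod.ext_iff]
  have hnorm : ∀ u v : ℝ, ‖((u, v) : ℝ × ℝ)‖ = max |u| |v| := by
    intro u v; rfl
  have main : ∀ m n : ℕ, n ≤ m → ∀ x : ℝ × ℝ,
      exp ((-Real.log b) * ((m : ℝ) - n)) *
          (‖evolP A projFst m n x‖ + ‖(1 - projFst n) x‖) ≤
        ((n : ℝ) + 2) ^ c * ‖projFst n x‖ +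
          ((m : ℝ) + 2) ^ c * ‖evolQ A projFst m n x‖ := by
    intro m n hnm x
    set k := m - n with hk
    have hm : m = n + k := by omega
    set G := ∏ j ∈ Finset.range k, a (n + j + 1) with hGdef
    have hGp : 0 < G := hGpos n k
    have hGl : G ≤ ((n : ℝ) + 2) ^ c := hGle n k
    have hbk : (0 : ℝ) < b ^ k := pow_pos hb0 k
    have hbik : (0 : ℝ) < b⁻¹ ^ k := pow_pos (inv_pos.mpr hb0) k
    have hexp : exp ((-Real.log b) * ((m : ℝ) - n)) = b⁻¹ ^ k := by
      have : (m : ℝ) - n = (k : ℝ) := by rw [hm]; push_cast; ring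
      rw [this, mul_comm, Real.exp_nat_mul, Real.exp_neg, Real.exp_log hb0]
    have hevP : ‖evolP A projFst m n x‖ = b ^ k * (G * |x.1|) := by
      have : evolP A projFst m n x = (b ^ k * (G * x.1), 0) := by
        simp only [evolP, ContinuousLinearMap.comp_apply, hP, evol, ← hk, hev]
        simp [hGdef]
      rw [this, hnorm]
      rw [abs_mul, abs_mul, abs_of_pos hbk, abs_of_pos hGp, abs_zero]
      exact max_eq_left (by positivity)
    have hevQ : ‖evolQ A projFst m n x‖ = b⁻¹ ^ k * |x.2| := by
      have : evolQ A projFst m n x = (0, b⁻¹ ^ k * x.2) := by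
        simp only [evolQ, ContinuousLinearMap.comp_apply, hQ, evol, ← hk, hev]
        simp
      rw [this, hnorm, abs_mul, abs_of_pos hbik, abs_zero]
      exact max_eq_right (by positivity)
    have hPn : ‖projFst n x‖ = |x.1| := by
      rw [hP, hnorm, abs_zero]; exact max_eq_left (abs_nonneg _)
    have hQn : ‖(1 - projFst n) x‖ = |x.2| := by
      rw [hQ, hnorm, abs_zero]; exact max_eq_right (abs_nonneg _)
    rw [hexp, hevP, hevQ, hPn, hQn]
    have hbb : b⁻¹ ^ k * b ^ k = 1 := by
      rw [← mul_pow, inv_mul_cancel₀ (ne_of_gt hb0), one_pow]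
    have h1m : (1 : ℝ) ≤ ((m : ℝ) + 2) ^ c := by
      apply Real.one_le_rpow (by linarith [Nat.cast_nonneg (α := ℝ) m]) hc.le
    have hx1 : (0 : ℝ) ≤ |x.1| := abs_nonneg _
    have hx2 : (0 : ℝ) ≤ |x.2| := abs_nonneg _
    have key : b⁻¹ ^ k * (b ^ k * (G * |x.1|) + |x.2|) =
        G * |x.1| + b⁻¹ ^ k * |x.2| := by
      rw [mul_add, ← mul_assoc, ← mul_assoc, hbb, one_mul]
    rw [key]
    have t1 : G * |x.1| ≤ ((n : ℝ) + 2) ^ c * |x.1| :=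
      mul_le_mul_of_nonneg_right hGl hx1
    have t2 : b⁻¹ ^ k * |x.2| ≤ ((m : ℝ) + 2) ^ c * (b⁻¹ ^ k * |x.2|) := by
      nlinarith [mul_nonneg hbik.le hx2]
    linarith
  refine ⟨main, -Real.log b, by linarith, fun n => ((n : ℝ) + 2) ^ c, ?_, ?_, main⟩
  · intro n; positivity
  · intro i j hij
    have : (i : ℝ) ≤ (j : ℝ) := Nat.cast_le.mpr hij
    exact Real.rpow_le_rpow (by positivity) (by linarith) hc.le
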